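/- Let p be an exchangeable probability distribution on 𝒳^k whose one-shot encoding T has the mixture-geometric distribution Pr(T=t) = ∑_{x} p(x)(1-q(x))^{t-1} q(x) for a probability distribution q on 𝒳^k with q(x) > 0 whenever p(x) > 0. Then E[log₂ T] ≤ H(p) + D(p‖q), where H(p) = -∑_x p(x) log₂ p(x) and D(p‖q) = ∑_x p(x) log₂(p(x)/q(x)). -/

import Mathlib

open Real

private lemma summable_jp1 {r : ℝ} (h0 : 0 ≤ r) (h1 : r < 1) :
    Summable (fun j : ℕ => ((j : ℝ) + 1) * r ^ j) := by
  have hn : ‖r‖ < 1 := by rwa [Real.norm_eq_abs, abs_of_nonneg h0]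
  have h2 := summable_pow_mul_geometric_of_norm_lt_one 1 hn
  simp only [pow_one] at h2
  have h3 : Summable (fun j : ℕ => r ^ j) := summable_geometric_of_lt_one h0 h1
  have := h2.add h3
  exact this.congr (fun j => by ring)

private lemma geo_sum1 {r : ℝ} (h0 : 0 ≤ r) (h1 : r < 1) :
    ∑' j : ℕ, ((j : ℝ) + 1) * r ^ j = 1 / (1 - r) ^ 2 := by
  have hn : ‖r‖ < 1 := by rwa [Real.norm_eq_abs, abs_of_nonneg h0]
  have h2 := tsum_coe_mul_geometric_of_norm_lt_one hn
  have h3 : ∑' j : ℕ, r ^ j = (1 - r)⁻¹ := tsum_geometric_of_lt_one h0 h1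
  have hs1 : Summable (fun j : ℕ => (j : ℝ) * r ^ j) := by
    have := summable_pow_mul_geometric_of_norm_lt_one 1 hn
    simpa using this
  have hs0 : Summable (fun j : ℕ => r ^ j) := summable_geometric_of_lt_one h0 h1
  have heq : (fun j : ℕ => ((j : ℝ) + 1) * r ^ j)
      = fun j : ℕ => (j : ℝ) * r ^ j + r ^ j := by funext j; ring
  rw [heq, Summable.tsum_add hs1 hs0, h2, h3]
  have ha : (0:ℝ) < 1 - r := by linarith
  field_simp
  ring

private lemma aux_summable {a : ℝ} (h0 : 0 < a) (h1 : a ≤ 1) :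
    Summable (fun j : ℕ => (1 - a) ^ j * a * Real.logb 2 (j + 1)) := by
  have hr0 : (0:ℝ) ≤ 1 - a := by linarith
  have hr1 : 1 - a < 1 := by linarith
  have hS : Summable (fun j : ℕ => ((j : ℝ) + 1) * (1 - a) ^ j * (a * 2)) :=
    (summable_jp1 hr0 hr1).mul_right _
  apply Summable.of_nonneg_of_le _ _ hS
  · intro j
    have hnn : (0:ℝ) ≤ Real.logb 2 (j + 1) :=
      Real.logb_nonneg one_lt_two (le_add_of_nonneg_left (Nat.cast_nonneg j))
    exact mul_nonneg (mul_nonneg (by positivity) h0.le) hnn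
  · intro j
    have hlogb : Real.logb 2 ((j : ℝ) + 1) ≤ 2 * ((j : ℝ) + 1) := by
      have hlog2 : (1:ℝ)/2 < Real.log 2 := by
        have := Real.log_two_gt_d9; linarith
      have hlogr : Real.log ((j : ℝ) + 1) ≤ (j : ℝ) + 1 := by
        have := Real.log_le_sub_one_of_pos (x := (j : ℝ) + 1) (by positivity)
        linarith
      have hnn : (0:ℝ) ≤ Real.log ((j : ℝ) + 1) :=
        Real.log_nonneg (by push_cast; linarith)
      rw [Real.logb]
      rw [div_le_iff₀ (by linarith)]
      nlinarith
    calc (1 - a) ^ j * a * Real.logb 2 (j + 1)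
        ≤ (1 - a) ^ j * a * (2 * ((j : ℝ) + 1)) := by
          apply mul_le_mul_of_nonneg_left hlogb (by positivity)
      _ = ((j : ℝ) + 1) * (1 - a) ^ j * (a * 2) := by ring

private lemma aux_key {a : ℝ} (h0 : 0 < a) (h1 : a ≤ 1) :
    ∑' j : ℕ, (1 - a) ^ j * a * Real.logb 2 (j + 1) ≤ - Real.logb 2 a := by
  have hr0 : (0:ℝ) ≤ 1 - a := by linarith
  have hr1 : 1 - a < 1 := by linarith
  have hlog2 : (0:ℝ) < Real.log 2 := Real.log_pos one_lt_two
  set g : ℕ → ℝ := fun j =>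
    ((- Real.log a - 1) * a / Real.log 2) * (1 - a) ^ j
      + (a * a / Real.log 2) * (((j : ℝ) + 1) * (1 - a) ^ j) with hg
  have hsum0 : Summable (fun j : ℕ => (1 - a) ^ j) := summable_geometric_of_lt_one hr0 hr1
  have hsum1 : Summable (fun j : ℕ => ((j : ℝ) + 1) * (1 - a) ^ j) := summable_jp1 hr0 hr1
  have hgsum : Summable g := (hsum0.mul_left _).add (hsum1.mul_left _)
  have hle : ∀ j : ℕ, (1 - a) ^ j * a * Real.logb 2 (j + 1) ≤ g j := by
    intro j
    have hpos : (0:ℝ) < a * ((j : ℝ) + 1) := by positivity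
    have h2 : Real.log (a * ((j : ℝ) + 1)) ≤ a * ((j : ℝ) + 1) - 1 :=
      Real.log_le_sub_one_of_pos hpos
    rw [Real.log_mul (ne_of_gt h0) (by positivity)] at h2
    have h3 : Real.logb 2 ((j : ℝ) + 1)
        ≤ (- Real.log a + a * ((j : ℝ) + 1) - 1) / Real.log 2 := by
      rw [Real.logb, div_le_div_iff₀ hlog2 hlog2]
      nlinarith [hlog2]
    have h4 : (1 - a) ^ j * a * Real.logb 2 (j + 1)
        ≤ (1 - a) ^ j * a * ((- Real.log a + a * ((j : ℝ) + 1) - 1) / Real.log 2) := by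
      exact mul_le_mul_of_nonneg_left h3 (by positivity)
    calc (1 - a) ^ j * a * Real.logb 2 (j + 1)
        ≤ (1 - a) ^ j * a * ((- Real.log a + a * ((j : ℝ) + 1) - 1) / Real.log 2) := h4
      _ = g j := by rw [hg]; field_simp; ring
  have htsum_g : ∑' j, g j = - Real.logb 2 a := by
    rw [hg]
    rw [Summable.tsum_add (hsum0.mul_left _) (hsum1.mul_left _), tsum_mul_left, tsum_mul_left,
      tsum_geometric_of_lt_one hr0 hr1, geo_sum1 hr0 hr1]
    have ha : (1 : ℝ) - (1 - a) = a := by ring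
    rw [ha, Real.logb, ]
    field_simp
    ring
  calc ∑' j : ℕ, (1 - a) ^ j * a * Real.logb 2 (j + 1)
      ≤ ∑' j, g j := Summable.tsum_le_tsum hle (aux_summable h0 h1) hgsum
    _ = - Real.logb 2 a := htsum_g

/-- Let `p` be an exchangeable probability distribution on `𝒳^k` whose one-shot
encoding `T` has the mixture-geometric distribution
`Pr(T = t) = ∑_x p(x)(1-q(x))^{t-1} q(x)` for a probability distribution `q` on `𝒳^k`
with `q(x) > 0` whenever `p(x) > 0`. Then `E[log₂ T] ≤ H(p) + D(p‖q)`.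
Positive integers `t ≥ 1` are parameterized as `t = j + 1`. -/
theorem stmt3 {𝒳 : Type*} [Fintype 𝒳] (k : ℕ) (hk : 0 < k)
    (p q : (Fin k → 𝒳) → ℝ)
    (hp0 : ∀ x, 0 ≤ p x) (hp1 : ∑ x, p x = 1)
    (hq0 : ∀ x, 0 ≤ q x) (hq1 : ∑ x, q x = 1)
    (hexch : ∀ (σ : Equiv.Perm (Fin k)) (x : Fin k → 𝒳), p (x ∘ σ) = p x)
    (hpos : ∀ x, 0 < p x → 0 < q x) :
    ∑' j : ℕ, (∑ x, p x * (1 - q x) ^ j * q x) * Real.logb 2 (j + 1) ≤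
      (-∑ x, p x * Real.logb 2 (p x)) + ∑ x, p x * Real.logb 2 (p x / q x) := by
  classical
  have hq_le : ∀ x, q x ≤ 1 := by
    intro x
    calc q x ≤ ∑ y, q y := Finset.single_le_sum (fun i _ => hq0 i) (Finset.mem_univ x)
      _ = 1 := hq1
  set F : (Fin k → 𝒳) → ℕ → ℝ :=
    fun x j => p x * ((1 - q x) ^ j * q x * Real.logb 2 (j + 1)) with hF
  have hFsum : ∀ x, Summable (F x) := by
    intro x
    rcases eq_or_lt_of_le (hp0 x) with h | h
    · have : F x = fun _ => 0 := by funext j; simp [hF, ← h]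
      rw [this]; exact summable_zero
    · exact (aux_summable (hpos x h) (hq_le x)).mul_left (p x)
  have hL : ∑' j : ℕ, (∑ x, p x * (1 - q x) ^ j * q x) * Real.logb 2 (j + 1)
      = ∑ x, ∑' j, F x j := by
    rw [← Summable.tsum_finsetSum (fun x _ => hFsum x)]
    congr 1; funext j
    rw [Finset.sum_mul]
    exact Finset.sum_congr rfl (fun x _ => by simp only [hF]; ring)
  have hx : ∀ x, ∑' j, F x j ≤ -(p x * Real.logb 2 (q x)) := by
    intro x
    rcases eq_or_lt_of_le (hp0 x) with h | h
    · have : F x = fun _ => 0 := by funext j; simp [hF, ← h]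
      simp [this, ← h]
    · have hq := hpos x h
      have : ∑' j, F x j = p x * ∑' j : ℕ, (1 - q x) ^ j * q x * Real.logb 2 (j + 1) := by
        rw [hF]; exact tsum_mul_left
      rw [this]
      calc p x * ∑' j : ℕ, (1 - q x) ^ j * q x * Real.logb 2 (j + 1)
          ≤ p x * (- Real.logb 2 (q x)) :=
            mul_le_mul_of_nonneg_left (aux_key hq (hq_le x)) (le_of_lt h)
        _ = -(p x * Real.logb 2 (q x)) := by ring
  have hR : (-∑ x, p x * Real.logb 2 (p x)) + ∑ x, p x * Real.logb 2 (p x / q x)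
      = ∑ x, -(p x * Real.logb 2 (q x)) := by
    have hterm : ∀ x, -(p x * Real.logb 2 (p x)) + p x * Real.logb 2 (p x / q x)
        = -(p x * Real.logb 2 (q x)) := by
      intro x
      rcases eq_or_lt_of_le (hp0 x) with h | h
      · simp [← h]
      · rw [Real.logb_div (ne_of_gt h) (ne_of_gt (hpos x h))]; ring
    calc (-∑ x, p x * Real.logb 2 (p x)) + ∑ x, p x * Real.logb 2 (p x / q x)
        = ∑ x, (-(p x * Real.logb 2 (p x)) + p x * Real.logb 2 (p x / q x)) := by
          rw [Finset.sum_add_distrib, Finset.sum_neg_distrib]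
      _ = ∑ x, -(p x * Real.logb 2 (q x)) := Finset.sum_congr rfl (fun x _ => hterm x)
  rw [hL, hR]
  exact Finset.sum_le_sum (fun x _ => hx x)
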